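/- Let ε ∈ (0, 1/2], δ ∈ (0,1), c = 80/δ, and let G be a graph with m > c³δ/ε⁴ + 1/(4ε⁴) edges. Let H = {v : deg(v) ≥ ε²m/c}, L = V∖H, and suppose e(H,L) < (1/2 + ε²)·m. Let m_L and Δ_L denote the number of edges and the maximum degree of G[L]. Then Δ_L < (ε²δ/4)·m_L − 1/(4ε²). -/

import Mathlib

/-- Number of edges of `G` with both endpoints in `S`. -/
def edgesWithin {V : Type*} [Fintype V] [DecidableEq V]
    (G : SimpleGraph V) [DecidableRel G.Adj] (S : Finset V) : ℕ :=
  (G.edgeFinset.filter (fun e => ∀ v ∈ e, v ∈ S)).card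

/-- Number of edges of `G` with exactly one endpoint in `H`. -/
def eBetween {V : Type*} [Fintype V] [DecidableEq V]
    (G : SimpleGraph V) [DecidableRel G.Adj] (H : Finset V) : ℕ :=
  (G.edgeFinset.filter (fun e => ¬ (e.map (fun v => decide (v ∈ H))).IsDiag)).card

lemma stmt19_partition {V : Type*} [Fintype V] [DecidableEq V]
    (G : SimpleGraph V) [DecidableRel G.Adj] (H : Finset V) (L : Finset V)
    (hL : L = Finset.univ \ H) :
    G.edgeFinset.card = edgesWithin G H + edgesWithin G L + eBetween G H := by
  classical
  rw [edgesWithin, edgesWithin, eBetween]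
  rw [← Finset.card_filter_add_card_filter_not
    (s := G.edgeFinset) (p := fun e => ¬ (e.map (fun v => decide (v ∈ H))).IsDiag)]
  rw [add_comm, Nat.add_right_cancel_iff]
  have : G.edgeFinset.filter (fun e => ¬¬ (e.map (fun v => decide (v ∈ H))).IsDiag)
      = G.edgeFinset.filter (fun e => (∀ v ∈ e, v ∈ H) ∨ (∀ v ∈ e, v ∈ L)) := by
    apply Finset.filter_congr
    intro e he
    induction e with
    | _ a b =>
      simp only [Sym2.map_pair_eq, Sym2.mk_isDiag_iff, decide_eq_decide, not_not,
        Sym2.mem_iff, hL, Finset.mem_sdiff, Finset.mem_univ, true_and]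
      constructor
      · rintro h
        by_cases ha : a ∈ H
        · left; rintro v (rfl | rfl) <;> simp_all
        · right; rintro v (rfl | rfl) <;> simp_all
      · rintro (h | h) <;>
        · have h1 := h a (Or.inl rfl); have h2 := h b (Or.inr rfl); tauto
  rw [this, Finset.filter_or, Finset.card_union_of_disjoint]
  rw [Finset.disjoint_filter]
  intro e he h1 h2
  induction e with
  | _ a b =>
    have := h1 a (by simp); have := h2 a (by simp)
    rw [hL] at this; simp at this; tauto

set_option maxHeartbeats 1600000 in
theorem stmt19 {V : Type*} [Fintype V] [DecidableEq V]
    (G : SimpleGraph V) [DecidableRel G.Adj]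
    (ε δ : ℝ) (hε0 : 0 < ε) (hε : ε ≤ 1/2) (hδ0 : 0 < δ) (hδ1 : δ < 1)
    (c : ℝ) (hc : c = 80 / δ)
    (m : ℕ) (hm : m = G.edgeFinset.card)
    (hm' : (m : ℝ) > c^3 * δ / ε^4 + 1 / (4 * ε^4))
    (H L : Finset V)
    (hH : H = Finset.univ.filter (fun v => ε^2 * m / c ≤ (G.degree v : ℝ)))
    (hL : L = Finset.univ \ H)
    (hHL : (eBetween G H : ℝ) < (1/2 + ε^2) * m)
    (mL ΔL : ℕ)
    (hmL : mL = edgesWithin G L)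
    (hΔL : ΔL = L.sup (fun v => ((G.neighborFinset v) ∩ L).card)) :
    (ΔL : ℝ) < ε^2 * δ / 4 * mL - 1 / (4 * ε^2) := by
  classical
  have hc0 : 0 < c := by rw [hc]; positivity
  have hε2 : (0:ℝ) < ε^2 := by positivity
  have hcδ : c * δ = 80 := by rw [hc]; field_simp
  -- m is positive
  have hMpos : (0:ℝ) < (m:ℝ) := lt_trans (by positivity) hm'
  -- threshold bound for ΔL
  have hΔ : (ΔL : ℝ) < ε^2 * m / c := by
    rcases L.eq_empty_or_nonempty with h | hne
    · rw [hΔL, h]; simp; positivity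
    · obtain ⟨v, hv, heq⟩ := Finset.exists_mem_eq_sup L hne
        (fun v => ((G.neighborFinset v) ∩ L).card)
      have hvH : v ∉ H := by rw [hL] at hv; exact (Finset.mem_sdiff.mp hv).2
      have hdeg : (G.degree v : ℝ) < ε^2 * m / c := by
        by_contra hcon
        exact hvH (by rw [hH]; simp; linarith)
      have hle : ((G.neighborFinset v) ∩ L).card ≤ G.degree v := by
        rw [← SimpleGraph.card_neighborFinset_eq_degree]
        exact Finset.card_le_card Finset.inter_subset_left
      rw [hΔL, heq]
      calc (((G.neighborFinset v) ∩ L).card : ℝ) ≤ G.degree v := by exact_mod_cast hle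
        _ < _ := hdeg
  -- |H| bound
  have hHcard : (H.card : ℝ) * (ε^2 * m / c) ≤ 2 * m := by
    have h1 : ∀ v ∈ H, ε^2 * m / c ≤ (G.degree v : ℝ) := by
      intro v hv; rw [hH] at hv; simpa using (Finset.mem_filter.mp hv).2
    have h2 : (H.card : ℝ) * (ε^2 * m / c) ≤ ∑ v ∈ H, (G.degree v : ℝ) := by
      simpa using Finset.card_nsmul_le_sum H _ _ h1
    have h3 : ∑ v ∈ H, (G.degree v : ℝ) ≤ ∑ v : V, (G.degree v : ℝ) := by
      exact Finset.sum_le_sum_of_subset_of_nonneg (Finset.subset_univ H)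
        (fun v _ _ => by positivity)
    have h4 : ∑ v : V, (G.degree v : ℝ) = 2 * m := by
      rw [hm]; exact_mod_cast congrArg Nat.cast (G.sum_degrees_eq_twice_card_edges)
    linarith
  have hHbd : (H.card : ℝ) * ε^2 ≤ 2 * c := by
    have := hHcard
    rw [div_eq_mul_inv] at this
    have h5 : (H.card : ℝ) * ε^2 * m ≤ 2 * c * m := by
      have := mul_le_mul_of_nonneg_right this hc0.le
      calc (H.card : ℝ) * ε^2 * m = (H.card : ℝ) * (ε^2 * m * c⁻¹) * c := by
            field_simp
        _ ≤ 2 * m * c := this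
        _ = 2 * c * m := by ring
    exact le_of_mul_le_mul_right h5 hMpos
  -- edges within H bound
  have hmH : (edgesWithin G H : ℝ) ≤ (H.card : ℝ) * (H.card : ℝ) := by
    have hsub : edgesWithin G H ≤ H.sym2.card := by
      apply Finset.card_le_card
      intro e he
      rw [Finset.mem_filter] at he
      exact Finset.mem_sym2_iff.mpr he.2
    have hsym : H.sym2.card = (H.card + 1).choose 2 := Finset.card_sym2 H
    rw [Nat.choose_two_right] at hsym
    have h6 : (H.card + 1) * (H.card + 1 - 1) / 2 ≤ H.card * H.card := by
      have h7 : (H.card + 1) * (H.card + 1 - 1) ≤ H.card * H.card * 2 := by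
        simp only [Nat.add_sub_cancel]; nlinarith [Nat.le_refl H.card]
      calc (H.card + 1) * (H.card + 1 - 1) / 2 ≤ H.card * H.card * 2 / 2 :=
            Nat.div_le_div_right h7
        _ = H.card * H.card := Nat.mul_div_cancel _ (by norm_num)
    have : edgesWithin G H ≤ H.card * H.card := le_trans (hsym ▸ hsub) h6
    exact_mod_cast this
  -- edge partition
  have hpart : (m : ℝ) = (edgesWithin G H : ℝ) + mL + eBetween G H := by
    rw [hm, hmL]; exact_mod_cast congrArg Nat.cast (stmt19_partition G H L hL)
  -- final arithmetic
  set M := (m : ℝ)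
  set nH := (H.card : ℝ)
  set mH := (edgesWithin G H : ℝ)
  set eHL := (eBetween G H : ℝ)
  set D := (ΔL : ℝ)
  set ML := (mL : ℝ)
  have hnH0 : 0 ≤ nH := Nat.cast_nonneg _
  have hmH0 : 0 ≤ mH := Nat.cast_nonneg _
  clear_value M nH mH eHL D ML
  clear hm hL
  have hδcube : c^3 * δ = 80 * c^2 := by
    have : c^3 * δ = c^2 * (c * δ) := by ring
    rw [this, hcδ]; ring
  rw [hδcube] at hm'
  -- nH ≤ 2c/ε², so nH² ≤ 4c²/ε⁴
  have hnHsq : nH * nH * ε^4 ≤ 4 * c^2 := by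
    have := mul_le_mul hHbd hHbd (by positivity) (by positivity)
    calc nH * nH * ε^4 = (nH * ε^2) * (nH * ε^2) := by ring
      _ ≤ (2*c) * (2*c) := this
      _ = 4 * c^2 := by ring
  have hML : ML ≥ (1/2 - ε^2) * M - nH * nH := by
    have : mH ≤ nH * nH := hmH
    linarith [hpart, hHL]
  -- now: D < ε²M/c; want D < ε²δ/4 ML - 1/(4ε²)
  have hε4 : ε^2 ≤ 1/4 := by nlinarith
  have hA : 80 * c^2 + 1/4 < ε^4 * M := by
    have h8 : ε^4 * (80 * c^2 / ε^4 + 1 / (4 * ε^4)) = 80 * c^2 + 1/4 := by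
      field_simp
    have h8' := mul_lt_mul_of_pos_left hm' (pow_pos hε0 4)
    rw [h8] at h8'
    exact h8'
  have hc1 : (1:ℝ) < c := by
    rw [hc]
    rw [lt_div_iff₀ hδ0]
    linarith
  have hML4 : M / 4 - nH * nH ≤ ML := by
    have := mul_le_mul_of_nonneg_right hε4 hMpos.le
    linarith [hML]
  have hcc : c ≤ c^2 := by nlinarith [hc1, mul_self_nonneg (c-1)]
  have key2 : 4 * ε^4 * M ≤ 80 * ε^4 * ML - c := by
    have h9 : 80 * ε^4 * (M / 4 - nH * nH) ≤ 80 * ε^4 * ML :=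
      mul_le_mul_of_nonneg_left hML4 (by positivity)
    linarith [h9, hnHsq, hA, hcc]
  have hrw : ε^2 * δ / 4 = 20 * ε^2 / c := by
    rw [eq_div_iff (ne_of_gt hc0)]
    linear_combination (ε^2 / 4) * hcδ
  rw [hrw]
  have h10 : (20 * ε^2 / c) * ML - 1 / (4 * ε^2) - ε^2 * M / c
      = (80 * ε^4 * ML - c - 4 * ε^4 * M) / (4 * c * ε^2) := by
    field_simp
    ring
  have h11 : 0 ≤ (80 * ε^4 * ML - c - 4 * ε^4 * M) / (4 * c * ε^2) :=
    div_nonneg (by linarith) (by positivity)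
  linarith [hΔ]
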